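/- Fix cost values c_1, ..., c_n and entropy level H with 0 ≤ H ≤ log₂ n. Define P̂_i(μ) = 2^{−μ c_i} / ∑_j 2^{−μ c_j}. If μ ≥ 0 is chosen so that −∑_i P̂_i(μ) log₂ P̂_i(μ) = H, then among all probability distributions Q on {1,...,n} with entropy −∑_i Q_i log₂ Q_i ≥ H, the distribution P̂(μ) minimizes the average cost ∑_i Q_i c_i. -/

import Mathlib

open Real

lemma gibbs_cross (n : ℕ) (μ : ℝ) (c : Fin n → ℝ) (Z : ℝ)
    (Phat Q : Fin n → ℝ) (hQ1 : ∑ i, Q i = 1)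
    (hlogP : ∀ i, Real.log (Phat i) = -μ * c i * Real.log 2 - Real.log Z) :
    -∑ i, Q i * Real.log (Phat i)
      = μ * (∑ i, Q i * c i) * Real.log 2 + Real.log Z := by
  have : ∑ i, Q i * Real.log (Phat i)
      = ∑ i, (-(μ * (Q i * c i) * Real.log 2) - Q i * Real.log Z) := by
    refine Finset.sum_congr rfl fun i _ => ?_
    rw [hlogP i]; ring
  rw [this, Finset.sum_sub_distrib, Finset.sum_neg_distrib, ← Finset.sum_mul,
    ← Finset.mul_sum, ← Finset.sum_mul, hQ1]
  ring

/-- The Gibbs distribution `P̂ᵢ(μ) = 2^{-μ cᵢ} / ∑ⱼ 2^{-μ cⱼ}` with parameter `μ ≥ 0`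
matched to the entropy level `H` minimizes the average cost `∑ᵢ Qᵢ cᵢ` among all
probability distributions `Q` with entropy at least `H`. -/
theorem stmt12 (n : ℕ) (hn : 0 < n) (c : Fin n → ℝ) (H : ℝ)
    (hH0 : 0 ≤ H) (hHn : H ≤ Real.logb 2 n)
    (μ : ℝ) (hμ : 0 ≤ μ)
    (Phat : Fin n → ℝ)
    (hPhat : ∀ i, Phat i = (2 : ℝ) ^ (-μ * c i) / ∑ j, (2 : ℝ) ^ (-μ * c j))
    (hent : -∑ i, Phat i * Real.logb 2 (Phat i) = H) :
    ∀ Q : Fin n → ℝ, (∀ i, 0 ≤ Q i) → ∑ i, Q i = 1 →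
      H ≤ -∑ i, Q i * Real.logb 2 (Q i) →
      ∑ i, Phat i * c i ≤ ∑ i, Q i * c i := by
  intro Q hQ0 hQ1 hQH
  by_cases hQP : Q = Phat
  · rw [hQP]
  set Z : ℝ := ∑ j, (2 : ℝ) ^ (-μ * c j) with hZ
  have hZpos : 0 < Z :=
    Finset.sum_pos (fun j _ => rpow_pos_of_pos two_pos _) ⟨⟨0, hn⟩, Finset.mem_univ _⟩
  have hPpos : ∀ i, 0 < Phat i := fun i => by
    rw [hPhat]; exact div_pos (rpow_pos_of_pos two_pos _) hZpos
  have hPsum : ∑ i, Phat i = 1 := by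
    simp only [hPhat]; rw [← Finset.sum_div]; exact div_self (ne_of_gt hZpos)
  have hlog2 : (0 : ℝ) < Real.log 2 := Real.log_pos one_lt_two
  have hlogP : ∀ i, Real.log (Phat i) = -μ * c i * Real.log 2 - Real.log Z := by
    intro i
    rw [hPhat i, Real.log_div (ne_of_gt (rpow_pos_of_pos two_pos _)) (ne_of_gt hZpos),
      Real.log_rpow two_pos]
  have hentP : -∑ i, Phat i * Real.log (Phat i)
      = μ * (∑ i, Phat i * c i) * Real.log 2 + Real.log Z :=
    gibbs_cross n μ c Z Phat Phat hPsum hlogP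
  have hcross : -∑ i, Q i * Real.log (Phat i)
      = μ * (∑ i, Q i * c i) * Real.log 2 + Real.log Z :=
    gibbs_cross n μ c Z Phat Q hQ1 hlogP
  -- convert the two logb hypotheses to natural-log statements
  have hentP' : H * Real.log 2 = μ * (∑ i, Phat i * c i) * Real.log 2 + Real.log Z := by
    rw [← hentP, ← hent]
    simp only [Real.logb, div_eq_mul_inv]
    rw [neg_mul]
    congr 1
    rw [Finset.sum_mul]
    exact Finset.sum_congr rfl fun i _ => by
      field_simp
  have hQH' : H * Real.log 2 ≤ -∑ i, Q i * Real.log (Q i) := by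
    have h2 : (-∑ i, Q i * Real.logb 2 (Q i)) * Real.log 2 = -∑ i, Q i * Real.log (Q i) := by
      simp only [Real.logb, div_eq_mul_inv]
      rw [neg_mul]
      congr 1
      rw [Finset.sum_mul]
      exact Finset.sum_congr rfl fun i _ => by
        field_simp
    calc H * Real.log 2 ≤ (-∑ i, Q i * Real.logb 2 (Q i)) * Real.log 2 :=
          mul_le_mul_of_nonneg_right hQH hlog2.le
      _ = _ := h2
  -- strict Gibbs inequality since Q ≠ Phat
  obtain ⟨i₀, hi₀⟩ : ∃ i, Q i ≠ Phat i := by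
    by_contra h
    push_neg at h
    exact hQP (funext h)
  have hterm : ∀ i ∈ Finset.univ, Q i * (Real.log (Phat i) - Real.log (Q i)) ≤ Phat i - Q i := by
    intro i _
    rcases eq_or_lt_of_le (hQ0 i) with h0 | h0
    · rw [← h0]; simpa using (hPpos i).le
    · have hx : 0 < Phat i / Q i := div_pos (hPpos i) h0
      have := Real.log_le_sub_one_of_pos hx
      rw [Real.log_div (ne_of_gt (hPpos i)) (ne_of_gt h0)] at this
      have h2 : Q i * (Real.log (Phat i) - Real.log (Q i)) ≤ Q i * (Phat i / Q i - 1) :=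
        mul_le_mul_of_nonneg_left this h0.le
      calc Q i * (Real.log (Phat i) - Real.log (Q i)) ≤ Q i * (Phat i / Q i - 1) := h2
        _ = Phat i - Q i := by field_simp
  have hstrict : Q i₀ * (Real.log (Phat i₀) - Real.log (Q i₀)) < Phat i₀ - Q i₀ := by
    rcases eq_or_lt_of_le (hQ0 i₀) with h0 | h0
    · rw [← h0]; simpa using hPpos i₀
    · have hx : 0 < Phat i₀ / Q i₀ := div_pos (hPpos i₀) h0
      have hne : Phat i₀ / Q i₀ ≠ 1 := by
        intro h
        exact hi₀ ((div_eq_one_iff_eq (ne_of_gt h0)).mp h).symm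
      have := Real.log_lt_sub_one_of_pos hx hne
      rw [Real.log_div (ne_of_gt (hPpos i₀)) (ne_of_gt h0)] at this
      have h2 : Q i₀ * (Real.log (Phat i₀) - Real.log (Q i₀)) < Q i₀ * (Phat i₀ / Q i₀ - 1) :=
        (mul_lt_mul_iff_right₀ h0).mpr this
      calc Q i₀ * (Real.log (Phat i₀) - Real.log (Q i₀)) < Q i₀ * (Phat i₀ / Q i₀ - 1) := h2
        _ = Phat i₀ - Q i₀ := by field_simp
  have hgibbs : ∑ i, Q i * (Real.log (Phat i) - Real.log (Q i)) < ∑ i, (Phat i - Q i) :=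
    Finset.sum_lt_sum hterm ⟨i₀, Finset.mem_univ _, hstrict⟩
  have hsum0 : ∑ i, (Phat i - Q i) = 0 := by
    rw [Finset.sum_sub_distrib, hPsum, hQ1]; ring
  rw [hsum0] at hgibbs
  have hsplit : ∑ i, Q i * (Real.log (Phat i) - Real.log (Q i))
      = ∑ i, Q i * Real.log (Phat i) - ∑ i, Q i * Real.log (Q i) := by
    rw [← Finset.sum_sub_distrib]
    exact Finset.sum_congr rfl fun i _ => by ring
  rw [hsplit] at hgibbs
  -- so: -∑ Q log Q < -∑ Q log Phat
  have key : H * Real.log 2 < μ * (∑ i, Q i * c i) * Real.log 2 + Real.log Z := by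
    rw [← hcross]; linarith
  rw [hentP'] at key
  have hμc : μ * (∑ i, Phat i * c i) < μ * (∑ i, Q i * c i) := by
    have h2 : μ * (∑ i, Phat i * c i) * Real.log 2 < μ * (∑ i, Q i * c i) * Real.log 2 := by
      linarith
    exact (mul_lt_mul_iff_left₀ hlog2).mp h2
  rcases eq_or_lt_of_le hμ with h0 | h0
  · rw [← h0] at hμc; simp at hμc
  · exact ((mul_lt_mul_iff_right₀ h0).mp hμc).le
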